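/- Let Ω = (L₁, L₂) be a bounded open interval and A = −d²/dx² with domain D(A) = H²(Ω) ∩ H₀¹(Ω), and let H_k = D(A^{k/2}), so that H₃ = { u ∈ H³(Ω) : u(Lᵢ) = u''(Lᵢ) = 0, i = 1,2 }. Suppose c ∈ W^{3,∞}(Ω) satisfies c'(L₁) = c'(L₂) = 0. Then for every u ∈ H₃, the product cu belongs to H₃, i.e. cu ∈ H³(Ω) and (cu)(Lᵢ) = (cu)''(Lᵢ) = 0 for i = 1,2. -/

import Mathlib

lemma second_deriv_mul (c u : ℝ → ℝ) (hc : ContDiff ℝ 3 c) (hu : ContDiff ℝ 3 u) (x : ℝ) :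
    deriv (deriv fun y => c y * u y) x =
      deriv (deriv c) x * u x + 2 * (deriv c x * deriv u x) + c x * deriv (deriv u) x := by
  have hc1 : ∀ y, DifferentiableAt ℝ c y := fun y =>
    (hc.differentiable (by norm_num)).differentiableAt
  have hu1 : ∀ y, DifferentiableAt ℝ u y := fun y =>
    (hu.differentiable (by norm_num)).differentiableAt
  have hcd : ContDiff ℝ 2 (deriv c) := hc.iterate_deriv' 2 1
  have hud : ContDiff ℝ 2 (deriv u) := hu.iterate_deriv' 2 1
  have hc2 : ∀ y, DifferentiableAt ℝ (deriv c) y := fun y =>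
    (hcd.differentiable (by norm_num)).differentiableAt
  have hu2 : ∀ y, DifferentiableAt ℝ (deriv u) y := fun y =>
    (hud.differentiable (by norm_num)).differentiableAt
  have h1 : deriv (fun y => c y * u y) = fun y => deriv c y * u y + c y * deriv u y := by
    funext y
    exact deriv_mul (hc1 y) (hu1 y)
  rw [h1, deriv_fun_add (f := fun y => deriv c y * u y) (g := fun y => c y * deriv u y) ((hc2 x).mul (hu1 x)) ((hc1 x).mul (hu2 x)),
    deriv_fun_mul (hc2 x) (hu1 x), deriv_fun_mul (hc1 x) (hu2 x)]
  ring

theorem stmt_8 (L₁ L₂ : ℝ) (hL : L₁ < L₂) (c u : ℝ → ℝ)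
    (hc : ContDiff ℝ 3 c) (hc1 : deriv c L₁ = 0) (hc2 : deriv c L₂ = 0)
    (hu : ContDiff ℝ 3 u)
    (hu01 : u L₁ = 0) (hu02 : u L₂ = 0)
    (hu21 : deriv (deriv u) L₁ = 0) (hu22 : deriv (deriv u) L₂ = 0) :
    ContDiff ℝ 3 (fun x => c x * u x) ∧
    c L₁ * u L₁ = 0 ∧ c L₂ * u L₂ = 0 ∧
    deriv (deriv fun x => c x * u x) L₁ = 0 ∧
    deriv (deriv fun x => c x * u x) L₂ = 0 := by
  refine ⟨hc.mul hu, by rw [hu01]; ring, by rw [hu02]; ring, ?_, ?_⟩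
  · rw [second_deriv_mul c u hc hu, hu01, hc1, hu21]; ring
  · rw [second_deriv_mul c u hc hu, hu02, hc2, hu22]; ring
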